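/- Given two finite executions each producing a persistent fact (!K(t₁) and !K(t₂) respectively) by extending a common execution prefix using only rules from {MDOut, MDPub, MDFresh, MDAppl, Fresh}, the extensions can be combined (removing duplicated instantiations of Fresh, MDFresh and MDOut) into a single valid execution extending the same prefix in which both !K(t₁) and !K(t₂) hold simultaneously. -/

import Mathlib

/-- A multiset rewriting step: consumed linear facts, required (but not consumed)
persistent facts, action labels, and produced facts. -/
structure Step (F L : Type) where
  lin : Multiset F
  per : Multiset F
  act : Multiset L
  rhs : Multiset F

/-- Valid execution of a list of steps from one state to another: linear
premises are consumed, persistent premises must be present. -/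
inductive Exec {F L : Type} [DecidableEq F] :
    Multiset F → List (Step F L) → Multiset F → Prop where
  | nil (S : Multiset F) : Exec S [] S
  | cons {S S' : Multiset F} {st : Step F L} {rest : List (Step F L)}
      (hlin : st.lin ≤ S) (hper : ∀ f ∈ st.per, f ∈ S)
      (h : Exec (S - st.lin + st.rhs) rest S') :
      Exec S (st :: rest) S'

/-- The message deduction and fresh-name rules: MDOut, MDPub, MDFresh, MDAppl and
Fresh.  `!K`-facts appear as persistent premises (checked but never consumed). -/
def MDstep {T F L : Type} (Out Fr K : T → F) (pub : T → Prop)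
    (appl : Multiset T → T → Prop) (st : Step F L) : Prop :=
  st.act = 0 ∧ (
    (∃ u, st.lin = {Out u} ∧ st.per = 0 ∧ st.rhs = {K u}) ∨          -- MDOut
    (∃ u, pub u ∧ st.lin = 0 ∧ st.per = 0 ∧ st.rhs = {K u}) ∨        -- MDPub
    (∃ a, st.lin = {Fr a} ∧ st.per = 0 ∧ st.rhs = {K a}) ∨           -- MDFresh
    (∃ args u, appl args u ∧ st.lin = 0 ∧ st.per = Multiset.map K args ∧
      st.rhs = {K u}) ∨                                              -- MDAppl
    (∃ a, st.lin = 0 ∧ st.per = 0 ∧ st.rhs = {Fr a}))                -- Fresh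

section Aux

variable {T F L : Type} [DecidableEq F]
variable {Out Fr K : T → F} {pub : T → Prop} {appl : Multiset T → T → Prop}

lemma exec_append {A B C : Multiset F} {l1 l2 : List (Step F L)}
    (h1 : Exec A l1 B) (h2 : Exec B l2 C) : Exec A (l1 ++ l2) C := by
  induction h1 with
  | nil A => simpa using h2
  | cons hlin hper h ih => exact Exec.cons hlin hper (ih h2)

variable (hOutInj : Function.Injective Out) (hFrInj : Function.Injective Fr)
    (hOF : ∀ a b, Out a ≠ Fr b) (hOK : ∀ a b, Out a ≠ K b)
    (hFK : ∀ a b, Fr a ≠ K b)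

include hOutInj hFrInj hOF hOK hFK in
lemma step_mono {A : Multiset F} {st : Step F L}
    (hst : MDstep Out Fr K pub appl st) :
    (∀ u, K u ∈ A → K u ∈ A - st.lin + st.rhs) ∧
    (∀ u, Out u ∈ A → Out u ∈ A - st.lin + st.rhs ∨ K u ∈ A - st.lin + st.rhs) ∧
    (∀ a, Fr a ∈ A → Fr a ∈ A - st.lin + st.rhs ∨ K a ∈ A - st.lin + st.rhs) := by
  obtain ⟨-, hc⟩ := hst
  rcases hc with ⟨u, hl, -, hr⟩ | ⟨u, -, hl, -, hr⟩ | ⟨a, hl, -, hr⟩ |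
      ⟨args, u, -, hl, -, hr⟩ | ⟨a, hl, -, hr⟩ <;>
    simp only [hl, hr, Multiset.sub_singleton, Multiset.sub_zero] <;>
    refine ⟨fun v hv => ?_, fun v hv => ?_, fun b hb => ?_⟩ <;>
    simp only [Multiset.mem_add, Multiset.mem_singleton]
  -- MDOut
  · exact Or.inl ((Multiset.mem_erase_of_ne (fun h => hOK u v h.symm)).2 hv)
  · by_cases hvu : Out v = Out u
    · exact Or.inr (Or.inr (congrArg K (hOutInj hvu)))
    · exact Or.inl (Or.inl ((Multiset.mem_erase_of_ne hvu).2 hv))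
  · exact Or.inl (Or.inl ((Multiset.mem_erase_of_ne (fun h => hOF u b h.symm)).2 hb))
  -- MDPub
  · exact Or.inl hv
  · exact Or.inl (Or.inl hv)
  · exact Or.inl (Or.inl hb)
  -- MDFresh
  · exact Or.inl ((Multiset.mem_erase_of_ne (fun h => hFK a v h.symm)).2 hv)
  · exact Or.inl (Or.inl ((Multiset.mem_erase_of_ne (hOF v a)).2 hv))
  · by_cases hba : Fr b = Fr a
    · exact Or.inr (Or.inr (congrArg K (hFrInj hba)))
    · exact Or.inl (Or.inl ((Multiset.mem_erase_of_ne hba).2 hb))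
  -- MDAppl
  · exact Or.inl hv
  · exact Or.inl (Or.inl hv)
  · exact Or.inl (Or.inl hb)
  -- Fresh
  · exact Or.inl hv
  · exact Or.inl (Or.inl hv)
  · exact Or.inl (Or.inl hb)

include hOutInj hFrInj hOF hOK hFK in
lemma exec_mono {A B : Multiset F} {l : List (Step F L)}
    (hexec : Exec A l B) (hmd : ∀ st ∈ l, MDstep Out Fr K pub appl st) :
    (∀ u, K u ∈ A → K u ∈ B) ∧
    (∀ u, Out u ∈ A → Out u ∈ B ∨ K u ∈ B) ∧
    (∀ a, Fr a ∈ A → Fr a ∈ B ∨ K a ∈ B) := by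
  induction hexec with
  | nil A => exact ⟨fun u h => h, fun u h => Or.inl h, fun a h => Or.inl h⟩
  | @cons A B st rest hlin hper h ih =>
    obtain ⟨ihK, ihO, ihF⟩ := ih (fun s hs => hmd s (List.mem_cons_of_mem _ hs))
    obtain ⟨sK, sO, sF⟩ := step_mono (A := A) hOutInj hFrInj hOF hOK hFK
      (hmd st (List.mem_cons_self))
    refine ⟨fun u hu => ihK u (sK u hu), fun u hu => ?_, fun a ha => ?_⟩
    · rcases sO u hu with h' | h'
      · exact ihO u h'
      · exact Or.inr (ihK u h')
    · rcases sF a ha with h' | h'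
      · exact ihF a h'
      · exact Or.inr (ihK a h')

include hOutInj hFrInj hOF hOK hFK in
lemma exec_sim {A C : Multiset F} {l : List (Step F L)}
    (hexec : Exec A l C) (hmd : ∀ st ∈ l, MDstep Out Fr K pub appl st) :
    ∀ B : Multiset F,
    (∀ u, K u ∈ A → K u ∈ B) →
    (∀ u, Out u ∈ A → Out u ∈ B ∨ K u ∈ B) →
    (∀ a, Fr a ∈ A → Fr a ∈ B ∨ K a ∈ B) →
    ∃ (l' : List (Step F L)) (D : Multiset F),
      Exec B l' D ∧ (∀ st ∈ l', MDstep Out Fr K pub appl st) ∧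
      (∀ u, K u ∈ C → K u ∈ D) := by
  induction hexec with
  | nil A => exact fun B hK _ _ => ⟨[], B, Exec.nil B, by simp, hK⟩
  | @cons A C st rest hlin hper h ih =>
    intro B hK hO hF
    have hst := hmd st (List.mem_cons_self)
    have hrest := fun s hs => hmd s (List.mem_cons_of_mem _ hs)
    obtain ⟨hact, hc⟩ := hst
    -- In each case, build the new invariant triple for A' := A - st.lin + st.rhs
    rcases hc with ⟨u, hl, hp, hr⟩ | ⟨u, hpub, hl, hp, hr⟩ | ⟨a, hl, hp, hr⟩ |
        ⟨args, u, happl, hl, hp, hr⟩ | ⟨a, hl, hp, hr⟩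
    · -- MDOut
      have huA : Out u ∈ A := by
        have := hlin; rw [hl] at this; exact Multiset.singleton_le.1 this
      rcases hO u huA with huB | huB
      · -- take the step in B
        have hA' : A - st.lin + st.rhs = A.erase (Out u) + {K u} := by
          rw [hl, hr, Multiset.sub_singleton]
        obtain ⟨l', D, hD, hmD, hKD⟩ := ih hrest (B.erase (Out u) + {K u})
          (by
            rw [hA']; intro v hv
            simp only [Multiset.mem_add, Multiset.mem_singleton] at hv ⊢
            rcases hv with hv | hv
            · exact Or.inl ((Multiset.mem_erase_of_ne
                (fun h => hOK u v h.symm)).2 (hK v (Multiset.mem_of_mem_erase hv)))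
            · exact Or.inr hv)
          (by
            rw [hA']; intro v hv
            simp only [Multiset.mem_add, Multiset.mem_singleton] at hv ⊢
            rcases hv with hv | hv
            · by_cases hvu : Out v = Out u
              · exact Or.inr (Or.inr (congrArg K (hOutInj hvu)))
              · rcases hO v (Multiset.mem_of_mem_erase hv) with h' | h'
                · exact Or.inl (Or.inl ((Multiset.mem_erase_of_ne hvu).2 h'))
                · exact Or.inr (Or.inl ((Multiset.mem_erase_of_ne
                    (fun hh => hOK u v hh.symm)).2 h'))
            · exact absurd hv (hOK v u))
          (by
            rw [hA']; intro b hb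
            simp only [Multiset.mem_add, Multiset.mem_singleton] at hb ⊢
            rcases hb with hb | hb
            · rcases hF b (Multiset.mem_of_mem_erase hb) with h' | h'
              · exact Or.inl (Or.inl ((Multiset.mem_erase_of_ne (fun hh => hOF u b hh.symm)).2 h'))
              · exact Or.inr (Or.inl ((Multiset.mem_erase_of_ne
                  (fun hh => hOK u b hh.symm)).2 h'))
            · exact absurd hb (hFK b u))
        exact ⟨st :: l', D, by
            refine Exec.cons ?_ ?_ ?_
            · rw [hl]; exact Multiset.singleton_le.2 huB
            · rw [hp]; simp
            · rw [hl, hr, Multiset.sub_singleton]; exact hD,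
          by
            intro s hs
            rcases List.mem_cons.1 hs with rfl | hs
            · exact ⟨hact, Or.inl ⟨u, hl, hp, hr⟩⟩
            · exact hmD s hs,
          hKD⟩
      · -- drop the step
        have hA' : A - st.lin + st.rhs = A.erase (Out u) + {K u} := by
          rw [hl, hr, Multiset.sub_singleton]
        obtain ⟨l', D, hD, hmD, hKD⟩ := ih hrest B
          (by
            rw [hA']; intro v hv
            simp only [Multiset.mem_add, Multiset.mem_singleton] at hv
            rcases hv with hv | hv
            · exact hK v (Multiset.mem_of_mem_erase hv)
            · exact hv ▸ huB)
          (by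
            rw [hA']; intro v hv
            simp only [Multiset.mem_add, Multiset.mem_singleton] at hv
            rcases hv with hv | hv
            · exact hO v (Multiset.mem_of_mem_erase hv)
            · exact absurd hv (hOK v u))
          (by
            rw [hA']; intro b hb
            simp only [Multiset.mem_add, Multiset.mem_singleton] at hb
            rcases hb with hb | hb
            · exact hF b (Multiset.mem_of_mem_erase hb)
            · exact absurd hb (hFK b u))
        exact ⟨l', D, hD, hmD, hKD⟩
    · -- MDPub
      have hA' : A - st.lin + st.rhs = A + {K u} := by rw [hl, hr, Multiset.sub_zero]
      obtain ⟨l', D, hD, hmD, hKD⟩ := ih hrest (B + {K u})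
        (by
          rw [hA']; intro v hv
          simp only [Multiset.mem_add, Multiset.mem_singleton] at hv ⊢
          exact hv.imp (hK v) id)
        (by
          rw [hA']; intro v hv
          simp only [Multiset.mem_add, Multiset.mem_singleton] at hv ⊢
          rcases hv with hv | hv
          · rcases hO v hv with h' | h'
            · exact Or.inl (Or.inl h')
            · exact Or.inr (Or.inl h')
          · exact absurd hv (hOK v u))
        (by
          rw [hA']; intro b hb
          simp only [Multiset.mem_add, Multiset.mem_singleton] at hb ⊢
          rcases hb with hb | hb
          · rcases hF b hb with h' | h'
            · exact Or.inl (Or.inl h')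
            · exact Or.inr (Or.inl h')
          · exact absurd hb (hFK b u))
      exact ⟨st :: l', D, by
          refine Exec.cons ?_ ?_ ?_
          · rw [hl]; exact Multiset.zero_le B
          · rw [hp]; simp
          · rw [hl, hr, Multiset.sub_zero]; exact hD,
        by
          intro s hs
          rcases List.mem_cons.1 hs with rfl | hs
          · exact ⟨hact, Or.inr (Or.inl ⟨u, hpub, hl, hp, hr⟩)⟩
          · exact hmD s hs,
        hKD⟩
    · -- MDFresh
      have haA : Fr a ∈ A := by
        have := hlin; rw [hl] at this; exact Multiset.singleton_le.1 this
      have hA' : A - st.lin + st.rhs = A.erase (Fr a) + {K a} := by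
        rw [hl, hr, Multiset.sub_singleton]
      rcases hF a haA with haB | haB
      · obtain ⟨l', D, hD, hmD, hKD⟩ := ih hrest (B.erase (Fr a) + {K a})
          (by
            rw [hA']; intro v hv
            simp only [Multiset.mem_add, Multiset.mem_singleton] at hv ⊢
            rcases hv with hv | hv
            · exact Or.inl ((Multiset.mem_erase_of_ne
                (fun h => hFK a v h.symm)).2 (hK v (Multiset.mem_of_mem_erase hv)))
            · exact Or.inr hv)
          (by
            rw [hA']; intro v hv
            simp only [Multiset.mem_add, Multiset.mem_singleton] at hv ⊢
            rcases hv with hv | hv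
            · rcases hO v (Multiset.mem_of_mem_erase hv) with h' | h'
              · exact Or.inl (Or.inl ((Multiset.mem_erase_of_ne (hOF v a)).2 h'))
              · exact Or.inr (Or.inl ((Multiset.mem_erase_of_ne
                  (fun hh => hFK a v hh.symm)).2 h'))
            · exact absurd hv (hOK v a))
          (by
            rw [hA']; intro b hb
            simp only [Multiset.mem_add, Multiset.mem_singleton] at hb ⊢
            rcases hb with hb | hb
            · by_cases hba : Fr b = Fr a
              · exact Or.inr (Or.inr (congrArg K (hFrInj hba)))
              · rcases hF b (Multiset.mem_of_mem_erase hb) with h' | h'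
                · exact Or.inl (Or.inl ((Multiset.mem_erase_of_ne hba).2 h'))
                · exact Or.inr (Or.inl ((Multiset.mem_erase_of_ne
                    (fun hh => hFK a b hh.symm)).2 h'))
            · exact absurd hb (hFK b a))
        exact ⟨st :: l', D, by
            refine Exec.cons ?_ ?_ ?_
            · rw [hl]; exact Multiset.singleton_le.2 haB
            · rw [hp]; simp
            · rw [hl, hr, Multiset.sub_singleton]; exact hD,
          by
            intro s hs
            rcases List.mem_cons.1 hs with rfl | hs
            · exact ⟨hact, Or.inr (Or.inr (Or.inl ⟨a, hl, hp, hr⟩))⟩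
            · exact hmD s hs,
          hKD⟩
      · -- drop
        obtain ⟨l', D, hD, hmD, hKD⟩ := ih hrest B
          (by
            rw [hA']; intro v hv
            simp only [Multiset.mem_add, Multiset.mem_singleton] at hv
            rcases hv with hv | hv
            · exact hK v (Multiset.mem_of_mem_erase hv)
            · exact hv ▸ haB)
          (by
            rw [hA']; intro v hv
            simp only [Multiset.mem_add, Multiset.mem_singleton] at hv
            rcases hv with hv | hv
            · exact hO v (Multiset.mem_of_mem_erase hv)
            · exact absurd hv (hOK v a))
          (by
            rw [hA']; intro b hb
            simp only [Multiset.mem_add, Multiset.mem_singleton] at hb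
            rcases hb with hb | hb
            · exact hF b (Multiset.mem_of_mem_erase hb)
            · exact absurd hb (hFK b a))
        exact ⟨l', D, hD, hmD, hKD⟩
    · -- MDAppl
      have hA' : A - st.lin + st.rhs = A + {K u} := by rw [hl, hr, Multiset.sub_zero]
      obtain ⟨l', D, hD, hmD, hKD⟩ := ih hrest (B + {K u})
        (by
          rw [hA']; intro v hv
          simp only [Multiset.mem_add, Multiset.mem_singleton] at hv ⊢
          exact hv.imp (hK v) id)
        (by
          rw [hA']; intro v hv
          simp only [Multiset.mem_add, Multiset.mem_singleton] at hv ⊢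
          rcases hv with hv | hv
          · rcases hO v hv with h' | h'
            · exact Or.inl (Or.inl h')
            · exact Or.inr (Or.inl h')
          · exact absurd hv (hOK v u))
        (by
          rw [hA']; intro b hb
          simp only [Multiset.mem_add, Multiset.mem_singleton] at hb ⊢
          rcases hb with hb | hb
          · rcases hF b hb with h' | h'
            · exact Or.inl (Or.inl h')
            · exact Or.inr (Or.inl h')
          · exact absurd hb (hFK b u))
      refine ⟨st :: l', D, ?_, ?_, hKD⟩
      · refine Exec.cons ?_ ?_ ?_
        · rw [hl]; exact Multiset.zero_le B
        · rw [hp]; intro f hf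
          obtain ⟨x, hx, rfl⟩ := Multiset.mem_map.1 hf
          refine hK x (hper (K x) ?_)
          rw [hp]; exact Multiset.mem_map_of_mem K hx
        · rw [hl, hr, Multiset.sub_zero]; exact hD
      · intro s hs
        rcases List.mem_cons.1 hs with rfl | hs
        · exact ⟨hact, Or.inr (Or.inr (Or.inr (Or.inl ⟨args, u, happl, hl, hp, hr⟩)))⟩
        · exact hmD s hs
    · -- Fresh
      have hA' : A - st.lin + st.rhs = A + {Fr a} := by rw [hl, hr, Multiset.sub_zero]
      obtain ⟨l', D, hD, hmD, hKD⟩ := ih hrest (B + {Fr a})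
        (by
          rw [hA']; intro v hv
          simp only [Multiset.mem_add, Multiset.mem_singleton] at hv ⊢
          rcases hv with hv | hv
          · exact Or.inl (hK v hv)
          · exact Or.inr hv)
        (by
          rw [hA']; intro v hv
          simp only [Multiset.mem_add, Multiset.mem_singleton] at hv ⊢
          rcases hv with hv | hv
          · rcases hO v hv with h' | h'
            · exact Or.inl (Or.inl h')
            · exact Or.inr (Or.inl h')
          · exact absurd hv (hOF v a))
        (by
          rw [hA']; intro b hb
          simp only [Multiset.mem_add, Multiset.mem_singleton] at hb ⊢
          rcases hb with hb | hb
          · rcases hF b hb with h' | h'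
            · exact Or.inl (Or.inl h')
            · exact Or.inr (Or.inl h')
          · exact Or.inl (Or.inr hb))
      refine ⟨st :: l', D, ?_, ?_, hKD⟩
      · refine Exec.cons ?_ ?_ ?_
        · rw [hl]; exact Multiset.zero_le B
        · rw [hp]; simp
        · rw [hl, hr, Multiset.sub_zero]; exact hD
      · intro s hs
        rcases List.mem_cons.1 hs with rfl | hs
        · exact ⟨hact, Or.inr (Or.inr (Or.inr (Or.inr ⟨a, hl, hp, hr⟩)))⟩
        · exact hmD s hs

end Aux


/-- Two executions extending a common prefix state `S` using only the rules
MDOut, MDPub, MDFresh, MDAppl and Fresh, producing the persistent facts `!K t₁`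
and `!K t₂` respectively, can be combined (dropping duplicated instantiations of
Fresh, MDFresh and MDOut) into a single valid execution from `S` using only those
rules, in which both `!K t₁` and `!K t₂` hold simultaneously. -/
theorem stmt_17 {T F L : Type} [DecidableEq F]
    (Out Fr K : T → F) (pub : T → Prop) (appl : Multiset T → T → Prop)
    (hOutInj : Function.Injective Out) (hFrInj : Function.Injective Fr)
    (hKInj : Function.Injective K)
    (hOF : ∀ a b, Out a ≠ Fr b) (hOK : ∀ a b, Out a ≠ K b)
    (hFK : ∀ a b, Fr a ≠ K b)
    (S S1 S2 : Multiset F) (ext1 ext2 : List (Step F L)) (t1 t2 : T)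
    (h1 : Exec S ext1 S1) (h2 : Exec S ext2 S2)
    (hmd1 : ∀ st ∈ ext1, MDstep Out Fr K pub appl st)
    (hmd2 : ∀ st ∈ ext2, MDstep Out Fr K pub appl st)
    (hK1 : K t1 ∈ S1) (hK2 : K t2 ∈ S2) :
    ∃ (ext : List (Step F L)) (S' : Multiset F),
      Exec S ext S' ∧ (∀ st ∈ ext, MDstep Out Fr K pub appl st) ∧
      K t1 ∈ S' ∧ K t2 ∈ S' := by
  obtain ⟨mK, mO, mF⟩ := exec_mono hOutInj hFrInj hOF hOK hFK h1 hmd1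
  obtain ⟨l', D, hD, hmD, hKD⟩ :=
    exec_sim hOutInj hFrInj hOF hOK hFK h2 hmd2 S1 mK mO mF
  obtain ⟨mK', -, -⟩ := exec_mono hOutInj hFrInj hOF hOK hFK hD hmD
  exact ⟨ext1 ++ l', D, exec_append h1 hD, by
      intro s hs
      rcases List.mem_append.1 hs with hs | hs
      · exact hmd1 s hs
      · exact hmD s hs,
    mK' t1 hK1, hKD t2 hK2⟩
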